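/- Let M = [[A, B],[B^T, C]] be a symmetric positive semidefinite block matrix. Then rank M = rank A if and only if C - B^T A^† B = 0. -/

import Mathlib

open Matrix

open scoped Classical

/-- Moore–Penrose pseudoinverse of a real matrix, defined via the four Penrose
conditions (which determine it uniquely when it exists). -/
noncomputable def pinv {n m : ℕ} (A : Matrix (Fin n) (Fin m) ℝ) : Matrix (Fin m) (Fin n) ℝ :=
  if h : ∃ X : Matrix (Fin m) (Fin n) ℝ,
      A * X * A = A ∧ X * A * X = X ∧ (A * X)ᵀ = A * X ∧ (X * A)ᵀ = X * A
  then h.choose else 0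


lemma exists_pinv {n : ℕ} (A : Matrix (Fin n) (Fin n) ℝ) (hA : Aᵀ = A) :
    ∃ X : Matrix (Fin n) (Fin n) ℝ,
      A * X * A = A ∧ X * A * X = X ∧ (A * X)ᵀ = A * X ∧ (X * A)ᵀ = X * A := by
  have hH : A.IsHermitian := by
    rw [Matrix.IsHermitian, conjTranspose_eq_transpose_of_trivial, hA]
  set U : Matrix (Fin n) (Fin n) ℝ := (Matrix.IsHermitian.eigenvectorUnitary hH :
    Matrix (Fin n) (Fin n) ℝ) with hU
  set d : Fin n → ℝ := hH.eigenvalues with hd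
  have hU1 : star U * U = 1 := Unitary.coe_star_mul_self _
  have hU2 : U * star U = 1 := Unitary.coe_mul_star_self _
  have hspec : A = U * diagonal d * star U := by
    have := hH.spectral_theorem
    simpa using this
  have hUT : star U = Uᵀ := by
    rw [Matrix.star_eq_conjTranspose, conjTranspose_eq_transpose_of_trivial]
  -- conjugation multiplication helper
  have hmul : ∀ v w : Fin n → ℝ,
      (U * diagonal v * star U) * (U * diagonal w * star U)
        = U * diagonal (fun i => v i * w i) * star U := by
    intro v w
    calc (U * diagonal v * star U) * (U * diagonal w * star U)
        = U * diagonal v * (star U * U) * diagonal w * star U := by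
          simp only [Matrix.mul_assoc]
      _ = U * (diagonal v * diagonal w) * star U := by
          rw [hU1]; simp only [Matrix.mul_one, Matrix.mul_assoc]
      _ = U * diagonal (fun i => v i * w i) * star U := by
          rw [diagonal_mul_diagonal]
  have htrans : ∀ v : Fin n → ℝ, (U * diagonal v * star U)ᵀ = U * diagonal v * star U := by
    intro v
    rw [hUT]
    rw [Matrix.transpose_mul, Matrix.transpose_mul, transpose_transpose, diagonal_transpose]
    simp only [Matrix.mul_assoc]
  have key1 : (fun i => d i * (d i)⁻¹ * d i) = d := by
    funext i
    rcases eq_or_ne (d i) 0 with h | h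
    · simp [h]
    · field_simp
  have key2 : (fun i => (d i)⁻¹ * d i * (d i)⁻¹) = fun i => (d i)⁻¹ := by
    funext i
    rcases eq_or_ne (d i) 0 with h | h
    · simp [h]
    · field_simp
  refine ⟨U * diagonal (fun i => (d i)⁻¹) * star U, ?_, ?_, ?_, ?_⟩
  · rw [hspec, hmul, hmul, key1]
  · rw [hspec, hmul, hmul, key2]
  · rw [hspec, hmul, htrans]
  · rw [hspec, hmul, htrans]

lemma penrose_uniq {n : ℕ} {A X Y : Matrix (Fin n) (Fin n) ℝ}
    (h1 : A * X * A = A) (h2 : X * A * X = X) (h3 : (A * X)ᵀ = A * X) (h4 : (X * A)ᵀ = X * A)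
    (g1 : A * Y * A = A) (g2 : Y * A * Y = Y) (g3 : (A * Y)ᵀ = A * Y) (g4 : (Y * A)ᵀ = Y * A) :
    X = Y := by
  have hAX : A * X = A * Y := by
    calc A * X = (A * X)ᵀ := h3.symm
      _ = ((A * Y * A) * X)ᵀ := by rw [g1]
      _ = ((A * Y) * (A * X))ᵀ := by simp only [Matrix.mul_assoc]
      _ = (A * X)ᵀ * (A * Y)ᵀ := by rw [Matrix.transpose_mul]
      _ = (A * X) * (A * Y) := by rw [h3, g3]
      _ = (A * X * A) * Y := by simp only [Matrix.mul_assoc]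
      _ = A * Y := by rw [h1]
  have hXA : X * A = Y * A := by
    calc X * A = (X * A)ᵀ := h4.symm
      _ = (X * (A * Y * A))ᵀ := by rw [g1]
      _ = ((X * A) * (Y * A))ᵀ := by simp only [Matrix.mul_assoc]
      _ = (Y * A)ᵀ * (X * A)ᵀ := by rw [Matrix.transpose_mul]
      _ = (Y * A) * (X * A) := by rw [h4, g4]
      _ = Y * (A * X * A) := by simp only [Matrix.mul_assoc]
      _ = Y * A := by rw [h1]
  calc X = X * A * X := h2.symm
    _ = X * (A * Y) := by rw [Matrix.mul_assoc, hAX]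
    _ = (X * A) * Y := by rw [Matrix.mul_assoc]
    _ = (Y * A) * Y := by rw [hXA]
    _ = Y := g2

lemma pinv_spec {n : ℕ} (A : Matrix (Fin n) (Fin n) ℝ) (hA : Aᵀ = A) :
    A * pinv A * A = A ∧ pinv A * A * pinv A = pinv A ∧
      (A * pinv A)ᵀ = A * pinv A ∧ (pinv A * A)ᵀ = pinv A * A := by
  have hex := exists_pinv A hA
  rw [pinv, dif_pos hex]
  exact hex.choose_spec

lemma pinv_symm {n : ℕ} (A : Matrix (Fin n) (Fin n) ℝ) (hA : Aᵀ = A) :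
    (pinv A)ᵀ = pinv A := by
  obtain ⟨h1, h2, h3, h4⟩ := pinv_spec A hA
  set P := pinv A
  have c1 : A * Pᵀ * A = A := by
    have := congrArg Matrix.transpose h1
    simpa [Matrix.transpose_mul, hA, Matrix.mul_assoc] using this
  have c2 : Pᵀ * A * Pᵀ = Pᵀ := by
    have := congrArg Matrix.transpose h2
    simpa [Matrix.transpose_mul, hA, Matrix.mul_assoc] using this
  have c3 : (A * Pᵀ)ᵀ = A * Pᵀ := by
    calc (A * Pᵀ)ᵀ = P * Aᵀ := by rw [Matrix.transpose_mul, transpose_transpose]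
      _ = P * A := by rw [hA]
      _ = (P * A)ᵀ := h4.symm
      _ = Aᵀ * Pᵀ := by rw [Matrix.transpose_mul]
      _ = A * Pᵀ := by rw [hA]
  have c4 : (Pᵀ * A)ᵀ = Pᵀ * A := by
    calc (Pᵀ * A)ᵀ = Aᵀ * P := by rw [Matrix.transpose_mul, transpose_transpose]
      _ = A * P := by rw [hA]
      _ = (A * P)ᵀ := h3.symm
      _ = Pᵀ * Aᵀ := by rw [Matrix.transpose_mul]
      _ = Pᵀ * A := by rw [hA]
  exact penrose_uniq c1 c2 c3 c4 h1 h2 h3 h4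


/-- A product of submodules is linearly equivalent to the product of the submodules. -/
noncomputable def subProdEquiv {R M N : Type*} [Ring R] [AddCommGroup M] [AddCommGroup N]
    [Module R M] [Module R N] (p : Submodule R M) (q : Submodule R N) :
    (p.prod q) ≃ₗ[R] p × q where
  toFun x := (⟨x.1.1, x.2.1⟩, ⟨x.1.2, x.2.2⟩)
  map_add' x y := rfl
  map_smul' c x := rfl
  invFun x := ⟨(x.1.1, x.2.1), ⟨x.1.2, x.2.2⟩⟩
  left_inv x := rfl
  right_inv x := rfl

lemma range_prodMap' {R M N M' N' : Type*} [Ring R] [AddCommGroup M] [AddCommGroup N]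
    [AddCommGroup M'] [AddCommGroup N'] [Module R M] [Module R N] [Module R M'] [Module R N']
    (f : M →ₗ[R] M') (g : N →ₗ[R] N') :
    LinearMap.range (f.prodMap g) = (LinearMap.range f).prod (LinearMap.range g) := by
  ext ⟨a, b⟩
  constructor
  · rintro ⟨⟨x, y⟩, h⟩
    rw [LinearMap.prodMap_apply, Prod.mk.injEq] at h
    exact ⟨⟨x, h.1⟩, ⟨y, h.2⟩⟩
  · rintro ⟨⟨x, hx⟩, ⟨y, hy⟩⟩
    exact ⟨(x, y), by rw [LinearMap.prodMap_apply, hx, hy]⟩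

lemma rank_fromBlocks_diag {n m : ℕ} (A : Matrix (Fin n) (Fin n) ℝ)
    (S : Matrix (Fin m) (Fin m) ℝ) :
    (fromBlocks A (0 : Matrix (Fin n) (Fin m) ℝ) (0 : Matrix (Fin m) (Fin n) ℝ) S).rank
      = A.rank + S.rank := by
  set e := LinearEquiv.sumArrowLequivProdArrow (Fin n) (Fin m) ℝ ℝ
  have key : (fromBlocks A 0 0 S).mulVecLin
      = e.symm.toLinearMap ∘ₗ (A.mulVecLin.prodMap S.mulVecLin) ∘ₗ e.toLinearMap := by
    apply LinearMap.ext
    intro x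
    funext j
    cases j with
    | inl i =>
      simp [e, mulVecLin_apply, fromBlocks_mulVec, LinearEquiv.sumArrowLequivProdArrow,
        Equiv.sumArrowEquivProdArrow]
    | inr i =>
      simp [e, mulVecLin_apply, fromBlocks_mulVec, LinearEquiv.sumArrowLequivProdArrow,
        Equiv.sumArrowEquivProdArrow]
  rw [Matrix.rank, key]
  rw [LinearMap.range_comp, LinearMap.range_comp_of_range_eq_top _ (LinearEquiv.range e)]
  rw [LinearEquiv.finrank_map_eq]
  rw [range_prodMap']
  rw [(subProdEquiv _ _).finrank_eq]
  rw [Module.finrank_prod]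
  rfl

lemma matrix_rank_eq_zero_iff {m : ℕ} (S : Matrix (Fin m) (Fin m) ℝ) :
    S.rank = 0 ↔ S = 0 := by
  constructor
  · intro h
    rw [Matrix.rank, Submodule.finrank_eq_zero, LinearMap.range_eq_bot] at h
    ext i j
    have h3 : S *ᵥ Pi.single j 1 = 0 := by
      have h2 : S.mulVecLin (Pi.single j 1) = 0 := by rw [h]; rfl
      simpa [mulVecLin_apply] using h2
    have := congrFun h3 i
    simpa using this
  · rintro rfl
    exact Matrix.rank_zero

/-- For a psd block matrix M = [[A,B],[Bᵀ,C]], rank M = rank A iff M/A = 0. -/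
theorem stmt4 {n m : ℕ} (A : Matrix (Fin n) (Fin n) ℝ) (B : Matrix (Fin n) (Fin m) ℝ)
    (C : Matrix (Fin m) (Fin m) ℝ) (hA : Aᵀ = A) (hC : Cᵀ = C)
    (hM : (Matrix.fromBlocks A B Bᵀ C).PosSemidef) :
    (Matrix.fromBlocks A B Bᵀ C).rank = A.rank ↔ C - Bᵀ * pinv A * B = 0 := by
  obtain ⟨h1, h2, h3, h4⟩ := pinv_spec A hA
  have hP : (pinv A)ᵀ = pinv A := pinv_symm A hA
  set P := pinv A with hPdef
  -- kernel containment: ker A ⊆ ker Bᵀ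
  have hker : ∀ x : Fin n → ℝ, A *ᵥ x = 0 → Bᵀ *ᵥ x = 0 := by
    intro x hx
    set y := Bᵀ *ᵥ x with hy
    have quad : ∀ t : ℝ, 0 ≤ 2 * t * (y ⬝ᵥ y) + y ⬝ᵥ (C *ᵥ y) := by
      intro t
      have h := hM.dotProduct_mulVec_nonneg (Sum.elim (t • x) y)
      rw [fromBlocks_mulVec] at h
      simp only [Sum.elim_comp_inl, Sum.elim_comp_inr] at h
      have hAx : A *ᵥ (t • x) = 0 := by rw [mulVec_smul, hx, smul_zero]
      have hBx : Bᵀ *ᵥ (t • x) = t • y := by rw [mulVec_smul, hy]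
      rw [hAx, hBx, zero_add] at h
      have hstar : star (Sum.elim (t • x) y) = Sum.elim (t • x) y := by
        simp [star_trivial]
      rw [hstar, sumElim_dotProduct_sumElim] at h
      have e1 : (t • x) ⬝ᵥ (B *ᵥ y) = t * (y ⬝ᵥ y) := by
        rw [smul_dotProduct, dotProduct_mulVec, ← mulVec_transpose, ← hy, smul_eq_mul]
      have e2 : y ⬝ᵥ (t • y + C *ᵥ y) = t * (y ⬝ᵥ y) + y ⬝ᵥ (C *ᵥ y) := by
        rw [dotProduct_add, dotProduct_smul, smul_eq_mul]
      rw [e1, e2] at h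
      calc (0:ℝ) ≤ t * (y ⬝ᵥ y) + (t * (y ⬝ᵥ y) + y ⬝ᵥ (C *ᵥ y)) := h
        _ = 2 * t * (y ⬝ᵥ y) + y ⬝ᵥ (C *ᵥ y) := by ring
    have hyy : y ⬝ᵥ y = 0 := by
      by_contra hne
      have hnn : 0 ≤ y ⬝ᵥ y := Finset.sum_nonneg fun i _ => mul_self_nonneg _
      have hpos : 0 < y ⬝ᵥ y := lt_of_le_of_ne hnn (Ne.symm hne)
      have hq := quad (-(y ⬝ᵥ (C *ᵥ y) + 1) / (2 * (y ⬝ᵥ y)))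
      have h2y : (2 : ℝ) * (y ⬝ᵥ y) ≠ 0 := by positivity
      rw [mul_comm (2:ℝ) (-(y ⬝ᵥ (C *ᵥ y) + 1) / (2 * (y ⬝ᵥ y))), mul_assoc,
        div_mul_cancel₀ _ h2y] at hq
      linarith
    exact (dotProduct_self_eq_zero).mp hyy
  -- B^T P A = B^T and A P B = B
  have hz : A * (1 - P * A) = 0 := by
    rw [Matrix.mul_sub, Matrix.mul_one, ← Matrix.mul_assoc, h1, sub_self]
  have hBz : Bᵀ * (1 - P * A) = 0 := by
    ext i j
    have hcol : A *ᵥ ((1 - P * A) *ᵥ Pi.single j 1) = 0 := by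
      rw [mulVec_mulVec, hz, zero_mulVec]
    have := congrFun (hker _ hcol) i
    rw [mulVec_mulVec] at this
    simpa using this
  have hBPA' : Bᵀ * (P * A) = Bᵀ := by
    have h' : Bᵀ - Bᵀ * (P * A) = 0 := by
      rw [← hBz, Matrix.mul_sub, Matrix.mul_one]
    exact (sub_eq_zero.mp h').symm
  have hAPB' : A * (P * B) = B := by
    have h' := congrArg Matrix.transpose hBPA'
    simp only [Matrix.transpose_mul, transpose_transpose] at h'
    rw [hA, hP] at h'
    rw [Matrix.mul_assoc] at h'
    exact h'
  -- congruence by the invertible matrix Linv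
  set S := C - Bᵀ * P * B with hSdef
  set Linv : Matrix (Fin n ⊕ Fin m) (Fin n ⊕ Fin m) ℝ :=
    fromBlocks 1 0 (-(Bᵀ * P)) 1 with hLinv
  have hLinvT : Linvᵀ = fromBlocks 1 (-(Bᵀ * P))ᵀ 0 1 := by
    rw [hLinv, fromBlocks_transpose, transpose_one, transpose_one, transpose_zero]
  have hN : Linv * (fromBlocks A B Bᵀ C) * Linvᵀ = fromBlocks A 0 0 S := by
    rw [hLinvT, hLinv, fromBlocks_multiply, fromBlocks_multiply, hSdef]
    simp only [Matrix.one_mul, Matrix.mul_one, Matrix.zero_mul, Matrix.mul_zero, add_zero,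
      zero_add, Matrix.neg_mul, Matrix.mul_neg, transpose_neg, transpose_mul,
      transpose_transpose, hP, Matrix.mul_assoc, hBPA', hAPB', neg_add_cancel,
      neg_add_eq_sub, sub_zero]
  have hdet1 : IsUnit Linv.det := by
    rw [hLinv, det_fromBlocks_zero₁₂, det_one, det_one, one_mul]
    exact isUnit_one
  have hdet2 : IsUnit (Linvᵀ).det := by
    rw [Matrix.det_transpose]
    exact hdet1
  have hrank : (fromBlocks A B Bᵀ C).rank = A.rank + S.rank := by
    have e1 : (Linv * (fromBlocks A B Bᵀ C) * Linvᵀ).rank = (fromBlocks A B Bᵀ C).rank := by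
      rw [Matrix.rank_mul_eq_left_of_isUnit_det _ _ hdet2,
        Matrix.rank_mul_eq_right_of_isUnit_det _ _ hdet1]
    rw [← e1, hN, rank_fromBlocks_diag]
  rw [hrank]
  constructor
  · intro h
    have hs : S.rank = 0 := by omega
    exact (matrix_rank_eq_zero_iff S).mp hs
  · intro h
    have hs : S.rank = 0 := (matrix_rank_eq_zero_iff S).mpr h
    omega
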